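/- Let T be a contraction on H and for |λ| < 1 define the characteristic function Θ_T(λ)u := −Tu + λ𝔇⋆(Id − λT*)⁻¹𝔇u for u ∈ K^⊥. Then for every λ with |λ| < 1, Θ_T(λ) maps K^⊥ into K⋆^⊥ and is a pure contraction: ‖Θ_T(λ)u‖ < ‖u‖ for every nonzero u ∈ K^⊥. -/

import Mathlib

set_option synthInstance.maxHeartbeats 1000000
set_option maxHeartbeats 2000000

open ContinuousLinearMap
open scoped InnerProductSpace

section Aux

open Polynomial

variable {H : Type*} [NormedAddCommGroup H] [InnerProductSpace ℂ H] [CompleteSpace H]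

private lemma aux_nonneg (T : H →L[ℂ] H) (hT : ‖T‖ ≤ 1) : 0 ≤ 1 - adjoint T ∘L T := by
  rw [nonneg_iff_isPositive]
  constructor
  · have h1 : IsSelfAdjoint (1 : H →L[ℂ] H) := IsSelfAdjoint.one _
    have h2 : IsSelfAdjoint (adjoint T ∘L T) := by
      rw [IsSelfAdjoint, star_eq_adjoint, adjoint_comp, adjoint_adjoint]
    exact (h1.sub h2).isSymmetric
  · intro x
    have h1 : (1 - adjoint T ∘L T) x = x - adjoint T (T x) := rfl
    have h2 : reApplyInnerSelf (1 - adjoint T ∘L T) x = ‖x‖ ^ 2 - ‖T x‖ ^ 2 := by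
      rw [reApplyInnerSelf_apply, h1, inner_sub_left, adjoint_inner_left, map_sub,
        inner_self_eq_norm_sq, inner_self_eq_norm_sq]
    rw [h2, sub_nonneg]
    have h3 := T.le_opNorm x
    have h4 : ‖T‖ * ‖x‖ ≤ 1 * ‖x‖ := by gcongr
    rw [one_mul] at h4
    have h5 := h3.trans h4
    nlinarith [norm_nonneg (T x)]

private lemma aux_sqrt_eq (A : H →L[ℂ] H) (hA : 0 ≤ A) : CFC.sqrt A = cfc Real.sqrt A := by
  refine CFC.sqrt_unique ?_ ?_
  · rw [← cfc_mul Real.sqrt Real.sqrt A]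
    have : cfc (fun x => Real.sqrt x * Real.sqrt x) A = cfc (id : ℝ → ℝ) A :=
      cfc_congr fun x hx => Real.mul_self_sqrt (spectrum_nonneg_of_nonneg hA hx)
    rw [this]
    exact cfc_id ℝ A
  · exact cfc_nonneg fun x hx => Real.sqrt_nonneg x

private lemma aux_intertwine [Nontrivial H] (Tc A B : H →L[ℂ] H) (hA : 0 ≤ A) (hB : 0 ≤ B)
    (h : Tc * A = B * Tc) : Tc * cfc Real.sqrt A = cfc Real.sqrt B * Tc := by
  have hpoly : ∀ p : ℝ[X], Tc * aeval A p = aeval B p * Tc := by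
    intro p
    have hpow : ∀ n : ℕ, Tc * A ^ n = B ^ n * Tc := by
      intro n
      induction n with
      | zero => simp
      | succ n ih => rw [pow_succ, pow_succ, ← mul_assoc, ih, mul_assoc, h, ← mul_assoc]
    rw [aeval_eq_sum_range, aeval_eq_sum_range, Finset.mul_sum, Finset.sum_mul]
    exact Finset.sum_congr rfl fun i _ => by rw [mul_smul_comm, smul_mul_assoc, hpow]
  set M := max ‖A‖ ‖B‖ with hMdef
  have hspec : ∀ C : H →L[ℂ] H, 0 ≤ C → ‖C‖ ≤ M → spectrum ℝ C ⊆ Set.Icc 0 M := by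
    intro C hC hCM x hx
    exact ⟨spectrum_nonneg_of_nonneg hC hx,
      ((Real.le_norm_self x).trans (spectrum.norm_le_norm_of_mem hx)).trans hCM⟩
  have hspecA := hspec A hA (le_max_left _ _)
  have hspecB := hspec B hB (le_max_right _ _)
  rw [← sub_eq_zero, ← norm_le_zero_iff]
  refine le_of_forall_pos_le_add fun ε hε => ?_
  rw [zero_add]
  set δ := ε / (2 * (‖Tc‖ + 1)) with hδdef
  have hδ : 0 < δ := by positivity
  obtain ⟨p, hp⟩ := exists_polynomial_near_of_continuousOn 0 M Real.sqrt
    Real.continuous_sqrt.continuousOn δ hδ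
  have key : ∀ C : H →L[ℂ] H, 0 ≤ C → spectrum ℝ C ⊆ Set.Icc 0 M →
      ‖cfc Real.sqrt C - aeval C p‖ ≤ δ := by
    intro C hC hsp
    have hsa : IsSelfAdjoint C := .of_nonneg hC
    rw [← cfc_polynomial p C hsa, ← cfc_sub Real.sqrt (fun x => p.eval x) C]
    exact norm_cfc_le hδ.le fun x hx => by
      rw [Real.norm_eq_abs, abs_sub_comm]; exact (hp x (hsp hx)).le
  calc ‖Tc * cfc Real.sqrt A - cfc Real.sqrt B * Tc‖
      = ‖Tc * (cfc Real.sqrt A - aeval A p) + (aeval B p - cfc Real.sqrt B) * Tc‖ := by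
        rw [mul_sub, sub_mul, hpoly p, sub_add_sub_cancel]
    _ ≤ ‖Tc * (cfc Real.sqrt A - aeval A p)‖ + ‖(aeval B p - cfc Real.sqrt B) * Tc‖ :=
        norm_add_le _ _
    _ ≤ ‖Tc‖ * δ + δ * ‖Tc‖ := by
        gcongr
        · exact (norm_mul_le _ _).trans (by gcongr; exact key A hA hspecA)
        · refine (norm_mul_le _ _).trans ?_
          gcongr
          rw [← norm_neg, neg_sub]
          exact key B hB hspecB
    _ ≤ (‖Tc‖ + 1) * δ + δ * (‖Tc‖ + 1) := by
        have h1 : (0:ℝ) ≤ δ := hδ.le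
        gcongr <;> linarith
    _ = ε := by rw [hδdef]; field_simp; ring

end Aux

theorem characteristic_function_pure_contraction
    {H : Type*} [NormedAddCommGroup H] [InnerProductSpace ℂ H] [CompleteSpace H]
    (T : H →L[ℂ] H) (hT : ‖T‖ ≤ 1)
    (K Ks : Submodule ℂ H)
    (hK : K = LinearMap.ker ((1 - adjoint T ∘L T : H →L[ℂ] H) : H →ₗ[ℂ] H))
    (hKs : Ks = LinearMap.ker ((1 - T ∘L adjoint T : H →L[ℂ] H) : H →ₗ[ℂ] H))
    (D Ds : H →L[ℂ] H)
    (hD : D = CFC.sqrt (1 - adjoint T ∘L T))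
    (hDs : Ds = CFC.sqrt (1 - T ∘L adjoint T))
    (Θ : ℂ → H → H)
    (hΘ : ∀ (lam : ℂ) (u : H),
      Θ lam u = -(T u) + lam • Ds (Ring.inverse (1 - lam • adjoint T) (D u))) :
    ∀ (lam : ℂ), ‖lam‖ < 1 → ∀ u ∈ Kᗮ,
      Θ lam u ∈ Ksᗮ ∧ (u ≠ 0 → ‖Θ lam u‖ < ‖u‖) := by
  intro lam hlam u hu
  rcases subsingleton_or_nontrivial H with hsub | hnt
  · refine ⟨?_, fun hu0 => absurd (Subsingleton.elim u 0) hu0⟩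
    have : Θ lam u = 0 := Subsingleton.elim _ _
    rw [this]
    exact Submodule.zero_mem _
  -- basic positivity facts
  have hA : 0 ≤ 1 - adjoint T ∘L T := aux_nonneg T hT
  have hTadj : ‖adjoint T‖ ≤ 1 := by
    rw [LinearIsometryEquiv.norm_map adjoint T]; exact hT
  have hB : 0 ≤ 1 - T ∘L adjoint T := by
    have := aux_nonneg (adjoint T) hTadj
    rwa [adjoint_adjoint] at this
  -- D and Ds are self-adjoint with known squares
  have hDnn : 0 ≤ D := hD ▸ CFC.sqrt_nonneg _
  have hDsnn : 0 ≤ Ds := hDs ▸ CFC.sqrt_nonneg _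
  have hDadj : adjoint D = D := by
    have := IsSelfAdjoint.of_nonneg hDnn
    rwa [IsSelfAdjoint, star_eq_adjoint] at this
  have hDsadj : adjoint Ds = Ds := by
    have := IsSelfAdjoint.of_nonneg hDsnn
    rwa [IsSelfAdjoint, star_eq_adjoint] at this
  have hDsq : D * D = 1 - adjoint T ∘L T := by
    rw [hD]; exact CFC.sqrt_mul_sqrt_self _ hA
  have hDssq : Ds * Ds = 1 - T ∘L adjoint T := by
    rw [hDs]; exact CFC.sqrt_mul_sqrt_self _ hB
  have hDmove : ∀ x y : H, ⟪D x, y⟫_ℂ = ⟪x, D y⟫_ℂ := by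
    intro x y; conv_lhs => rw [← hDadj]
    exact adjoint_inner_left D y x
  have hDsmove : ∀ x y : H, ⟪Ds x, y⟫_ℂ = ⟪x, Ds y⟫_ℂ := by
    intro x y; conv_lhs => rw [← hDsadj]
    exact adjoint_inner_left Ds y x
  have hDDapp : ∀ x : H, D (D x) = x - adjoint T (T x) := by
    intro x
    have := ContinuousLinearMap.ext_iff.mp hDsq x
    simpa [ContinuousLinearMap.mul_apply] using this
  have hDsDsapp : ∀ x : H, Ds (Ds x) = x - T (adjoint T x) := by
    intro x
    have := ContinuousLinearMap.ext_iff.mp hDssq x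
    simpa [ContinuousLinearMap.mul_apply] using this
  -- intertwining : T D = Ds T
  have hcomm : T * (1 - adjoint T ∘L T) = (1 - T ∘L adjoint T) * T := by
    ext x
    simp [ContinuousLinearMap.mul_apply, ContinuousLinearMap.sub_apply,
      ContinuousLinearMap.comp_apply, ContinuousLinearMap.one_apply, map_sub]
  have hTD : ∀ x : H, T (D x) = Ds (T x) := by
    intro x
    have hop : T * D = Ds * T := by
      rw [hD, hDs, aux_sqrt_eq _ hA, aux_sqrt_eq _ hB]
      exact aux_intertwine T _ _ hA hB hcomm
    have := ContinuousLinearMap.ext_iff.mp hop x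
    simpa [ContinuousLinearMap.mul_apply] using this
  -- kernels
  have hkerD : ∀ x : H, (1 - adjoint T ∘L T) x = 0 → D x = 0 := by
    intro x hx
    have h1 : ⟪D x, D x⟫_ℂ = 0 := by
      rw [hDmove, hDDapp]
      have : x - adjoint T (T x) = 0 := by
        simpa [ContinuousLinearMap.sub_apply, ContinuousLinearMap.comp_apply] using hx
      rw [this, inner_zero_right]
    exact inner_self_eq_zero.mp h1
  have hkerDs : ∀ x : H, (1 - T ∘L adjoint T) x = 0 → Ds x = 0 := by
    intro x hx
    have h1 : ⟪Ds x, Ds x⟫_ℂ = 0 := by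
      rw [hDsmove, hDsDsapp]
      have : x - T (adjoint T x) = 0 := by
        simpa [ContinuousLinearMap.sub_apply, ContinuousLinearMap.comp_apply] using hx
      rw [this, inner_zero_right]
    exact inner_self_eq_zero.mp h1
  -- the resolvent vector v
  have hunit : IsUnit (1 - lam • adjoint T) := by
    apply isUnit_one_sub_of_norm_lt_one
    calc ‖lam • adjoint T‖ = ‖lam‖ * ‖adjoint T‖ := norm_smul _ _
      _ ≤ ‖lam‖ * 1 := by gcongr
      _ = ‖lam‖ := by rw [mul_one]
      _ < 1 := hlam
  set v : H := Ring.inverse (1 - lam • adjoint T) (D u) with hvdef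
  set w : H := adjoint T v with hwdef
  have hv : v - lam • w = D u := by
    have h1 := Ring.mul_inverse_cancel _ hunit
    have h2 := ContinuousLinearMap.ext_iff.mp h1 (D u)
    simpa [ContinuousLinearMap.mul_apply, ContinuousLinearMap.sub_apply,
      ContinuousLinearMap.smul_apply, ContinuousLinearMap.one_apply] using h2
  have hθ : Θ lam u = -(T u) + lam • Ds v := hΘ lam u
  constructor
  · -- membership in Ksᗮ
    rw [Submodule.mem_orthogonal]
    intro z hz
    rw [hKs, LinearMap.mem_ker] at hz
    have hz' : (1 - T ∘L adjoint T) z = 0 := hz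
    have hDsz : Ds z = 0 := hkerDs z hz'
    have hTz : adjoint T z ∈ K := by
      rw [hK, LinearMap.mem_ker]
      show (1 - adjoint T ∘L T) (adjoint T z) = 0
      have : z - T (adjoint T z) = 0 := by
        simpa [ContinuousLinearMap.sub_apply, ContinuousLinearMap.comp_apply] using hz'
      calc (1 - adjoint T ∘L T) (adjoint T z)
          = adjoint T (z - T (adjoint T z)) := by
            simp [ContinuousLinearMap.sub_apply, ContinuousLinearMap.comp_apply, map_sub]
        _ = 0 := by rw [this, map_zero]
    have h1 : ⟪z, T u⟫_ℂ = 0 := by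
      rw [← adjoint_inner_left]
      exact (Submodule.mem_orthogonal K u).mp hu _ hTz
    have h2 : ⟪z, Ds v⟫_ℂ = 0 := by
      rw [← hDsmove, hDsz, inner_zero_left]
    rw [hθ, inner_add_right, inner_neg_right, h1, inner_smul_right, h2]
    ring
  · -- strict contraction
    intro hu0
    have hDu0 : D u ≠ 0 := by
      intro hDu
      have huK : u ∈ K := by
        rw [hK, LinearMap.mem_ker]
        show (1 - adjoint T ∘L T) u = 0
        have : D (D u) = 0 := by rw [hDu, map_zero]
        rw [hDDapp] at this
        simpa [ContinuousLinearMap.sub_apply, ContinuousLinearMap.comp_apply] using this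
      have := (Submodule.mem_orthogonal K u).mp hu u huK
      exact hu0 (inner_self_eq_zero.mp this)
    have hv0 : v ≠ 0 := by
      intro h0
      apply hDu0
      rw [← hv, h0, hwdef, h0, map_zero, smul_zero, sub_zero]
    -- inner product identities
    have hvw : ⟪v, w⟫_ℂ = ⟪T v, v⟫_ℂ := adjoint_inner_right T v v
    have hwv : ⟪w, v⟫_ℂ = (starRingEnd ℂ) ⟪T v, v⟫_ℂ := by
      rw [← inner_conj_symm, hvw]
    have hww : (starRingEnd ℂ) ⟪w, w⟫_ℂ = ⟪w, w⟫_ℂ := inner_conj_symm w w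
    have hDsvDsv : ⟪Ds v, Ds v⟫_ℂ = ⟪v, v⟫_ℂ - ⟪w, w⟫_ℂ := by
      rw [hDsmove, hDsDsapp, inner_sub_right]
      congr 1
      exact (adjoint_inner_left T (adjoint T v) v).symm
    have hTwv : ⟪T w, v⟫_ℂ = ⟪w, w⟫_ℂ := by
      rw [← adjoint_inner_right, ← hwdef]
    have hTuDsv : ⟪T u, Ds v⟫_ℂ = ⟪T v, v⟫_ℂ - (starRingEnd ℂ) lam * ⟪w, w⟫_ℂ := by
      rw [← hDsmove, ← hTD, ← hv, map_sub, inner_sub_left, map_smul, inner_smul_left, hTwv]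
    have hDsvTu : ⟪Ds v, T u⟫_ℂ = (starRingEnd ℂ) ⟪T v, v⟫_ℂ - lam * ⟪w, w⟫_ℂ := by
      rw [← inner_conj_symm, hTuDsv, map_sub, map_mul, RingHomCompTriple.comp_apply,
        RingHom.id_apply, hww]
    have hDuDu : ⟪D u, D u⟫_ℂ = ⟪v, v⟫_ℂ - lam * ⟪T v, v⟫_ℂ
        - (starRingEnd ℂ) lam * (starRingEnd ℂ) ⟪T v, v⟫_ℂ
        + (starRingEnd ℂ) lam * lam * ⟪w, w⟫_ℂ := by
      rw [← hv, inner_sub_left, inner_sub_right, inner_sub_right, inner_smul_left,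
        inner_smul_right, inner_smul_right, inner_smul_left, hvw, hwv]
      ring
    have hTuTu : ⟪T u, T u⟫_ℂ = ⟪u, u⟫_ℂ - ⟪D u, D u⟫_ℂ := by
      have h5 : ⟪D u, D u⟫_ℂ = ⟪u, u⟫_ℂ - ⟪T u, T u⟫_ℂ := by
        rw [hDmove, hDDapp, inner_sub_right, adjoint_inner_right]
      rw [h5]; ring
    -- main identity
    have e1 : ⟪Θ lam u, Θ lam u⟫_ℂ
        = ⟪u, u⟫_ℂ - (1 - lam * (starRingEnd ℂ) lam) * ⟪v, v⟫_ℂ := by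
      rw [hθ, inner_add_left, inner_add_right, inner_add_right, inner_neg_neg,
        inner_neg_left, inner_neg_right, inner_smul_left, inner_smul_right,
        inner_smul_left, inner_smul_right, hTuDsv, hDsvTu, hDsvDsv, hTuTu, hDuDu]
      ring
    have hself : ∀ x : H, ⟪x, x⟫_ℂ = ((‖x‖ ^ 2 : ℝ) : ℂ) := fun x => by
      exact_mod_cast inner_self_eq_norm_sq_to_K x
    rw [hself, hself, hself, Complex.mul_conj] at e1
    have e2 : ‖Θ lam u‖ ^ 2 = ‖u‖ ^ 2 - (1 - Complex.normSq lam) * ‖v‖ ^ 2 := by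
      exact_mod_cast e1
    have hns : Complex.normSq lam < 1 := by
      rw [← Complex.sq_norm]
      nlinarith [norm_nonneg lam]
    have hvpos : 0 < ‖v‖ ^ 2 := pow_pos (norm_pos_iff.mpr hv0) 2
    have hlt : ‖Θ lam u‖ ^ 2 < ‖u‖ ^ 2 := by nlinarith
    exact lt_of_pow_lt_pow_left₀ 2 (norm_nonneg u) hlt
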